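/- The Wiener algebra W(𝔻) equipped with the q-Duhamel product ⋆_q is a commutative unital Banach algebra: ‖f ⋆_q g‖_W ≤ ‖f‖_W ‖g‖_W, the product is associative, commutative, and 1 is the unit. -/

import Mathlib

open Finset

/-- q-factorial `[n]_q! = ∏_{j=1}^n (1-q^j)/(1-q)`. -/
noncomputable def qfact (q : ℂ) (n : ℕ) : ℂ :=
  ∏ j ∈ Finset.range n, (1 - q ^ (j + 1)) / (1 - q)

/-- Coefficients of the q-Duhamel product:
`(f ⋆_q g)_n = Σ_{k=0}^n a_k b_{n-k} [k]_q! [n-k]_q! / [n]_q!`. -/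
noncomputable def duh (q : ℂ) (a b : ℕ → ℂ) (n : ℕ) : ℂ :=
  ∑ k ∈ Finset.range (n + 1), a k * b (n - k) * qfact q k * qfact q (n - k) / qfact q n

/-- real q-factorial -/
noncomputable def qfactR (q : ℝ) (n : ℕ) : ℝ :=
  ∏ j ∈ Finset.range n, (1 - q ^ (j + 1)) / (1 - q)

lemma qfact_coe (q : ℝ) (n : ℕ) : qfact (q : ℂ) n = (qfactR q n : ℂ) := by
  unfold qfact qfactR
  push_cast
  rfl

lemma qfactR_pos {q : ℝ} (hq0 : 0 < q) (hq1 : q < 1) (n : ℕ) : 0 < qfactR q n := by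
  apply Finset.prod_pos
  intro j _
  apply div_pos
  · have : q ^ (j + 1) < 1 := pow_lt_one₀ hq0.le hq1 (Nat.succ_ne_zero j)
    linarith
  · linarith

lemma qfact_ne_zero {q : ℝ} (hq0 : 0 < q) (hq1 : q < 1) (n : ℕ) : qfact (q : ℂ) n ≠ 0 := by
  rw [qfact_coe]
  exact_mod_cast (qfactR_pos hq0 hq1 n).ne'

lemma qfactR_mul_le {q : ℝ} (hq0 : 0 < q) (hq1 : q < 1) {k n : ℕ} (hk : k ≤ n) :
    qfactR q k * qfactR q (n - k) ≤ qfactR q n := by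
  obtain ⟨m, rfl⟩ := Nat.exists_eq_add_of_le hk
  rw [Nat.add_sub_cancel_left]
  unfold qfactR
  rw [Finset.prod_range_add]
  apply mul_le_mul_of_nonneg_left _ (qfactR_pos hq0 hq1 k).le
  apply Finset.prod_le_prod
  · intro j _
    apply div_nonneg _ (by linarith)
    have : q ^ (j + 1) ≤ 1 := pow_le_one₀ hq0.le hq1.le
    linarith
  · intro j _
    apply div_le_div_of_nonneg_right _ (by linarith)
    have : q ^ (k + j + 1) ≤ q ^ (j + 1) :=
      pow_le_pow_of_le_one hq0.le hq1.le (by omega)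
    linarith

lemma qratio_le_one {q : ℝ} (hq0 : 0 < q) (hq1 : q < 1) {k n : ℕ} (hk : k ≤ n) :
    ‖qfact (q : ℂ) k * qfact (q : ℂ) (n - k) / qfact (q : ℂ) n‖ ≤ 1 := by
  rw [qfact_coe, qfact_coe, qfact_coe]
  rw [← Complex.ofReal_mul, ← Complex.ofReal_div, Complex.norm_real]
  rw [Real.norm_eq_abs, abs_div, abs_mul]
  rw [abs_of_pos (qfactR_pos hq0 hq1 k), abs_of_pos (qfactR_pos hq0 hq1 (n - k)),
    abs_of_pos (qfactR_pos hq0 hq1 n)]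
  rw [div_le_one (qfactR_pos hq0 hq1 n)]
  exact qfactR_mul_le hq0 hq1 hk

/-- duh as a power series coefficient -/
lemma duh_eq_coeff {q : ℝ} (hq0 : 0 < q) (hq1 : q < 1) (a b : ℕ → ℂ) (n : ℕ) :
    duh (q : ℂ) a b n =
      (PowerSeries.coeff n)
        (PowerSeries.mk (fun k => a k * qfact (q : ℂ) k) *
          PowerSeries.mk (fun k => b k * qfact (q : ℂ) k)) / qfact (q : ℂ) n := by
  rw [PowerSeries.coeff_mul, Finset.Nat.sum_antidiagonal_eq_sum_range_succ_mk]
  unfold duh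
  rw [Finset.sum_div]
  apply Finset.sum_congr rfl
  intro k _
  simp only [PowerSeries.coeff_mk]
  ring

lemma mk_duh {q : ℝ} (hq0 : 0 < q) (hq1 : q < 1) (a b : ℕ → ℂ) :
    PowerSeries.mk (fun k => duh (q : ℂ) a b k * qfact (q : ℂ) k) =
      PowerSeries.mk (fun k => a k * qfact (q : ℂ) k) *
        PowerSeries.mk (fun k => b k * qfact (q : ℂ) k) := by
  ext n
  rw [PowerSeries.coeff_mk, duh_eq_coeff hq0 hq1,
    div_mul_cancel₀ _ (qfact_ne_zero hq0 hq1 n)]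

theorem wiener_qDuhamel_banach_algebra (q : ℝ) (hq0 : 0 < q) (hq1 : q < 1) :
    (∀ a b : ℕ → ℂ, (Summable fun n => ‖a n‖) → (Summable fun n => ‖b n‖) →
        (Summable fun n => ‖duh (q : ℂ) a b n‖) ∧
          ∑' n : ℕ, ‖duh (q : ℂ) a b n‖ ≤ (∑' n : ℕ, ‖a n‖) * ∑' n : ℕ, ‖b n‖) ∧
      (∀ a b : ℕ → ℂ, duh (q : ℂ) a b = duh (q : ℂ) b a) ∧
      (∀ a b c : ℕ → ℂ, duh (q : ℂ) (duh (q : ℂ) a b) c = duh (q : ℂ) a (duh (q : ℂ) b c)) ∧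
      (∀ a : ℕ → ℂ, duh (q : ℂ) (fun n => if n = 0 then 1 else 0) a = a) := by
  refine ⟨?_, ?_, ?_, ?_⟩
  · -- norm bound
    intro a b ha hb
    have ha' : Summable fun n => ‖‖a n‖‖ := by simpa using ha
    have hb' : Summable fun n => ‖‖b n‖‖ := by simpa using hb
    set F : ℕ → ℝ := fun n => ∑ k ∈ Finset.range (n + 1), ‖a k‖ * ‖b (n - k)‖ with hF
    have hFnonneg : ∀ n, 0 ≤ F n := fun n =>
      Finset.sum_nonneg fun k _ => mul_nonneg (norm_nonneg _) (norm_nonneg _)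
    have hFsum : Summable F := by
      have := summable_norm_sum_mul_range_of_summable_norm ha' hb'
      refine this.congr fun n => ?_
      exact Real.norm_of_nonneg (hFnonneg n)
    have hbound : ∀ n, ‖duh (q : ℂ) a b n‖ ≤ F n := by
      intro n
      unfold duh
      refine (norm_sum_le _ _).trans ?_
      apply Finset.sum_le_sum
      intro k hk
      have hk' : k ≤ n := by
        simp only [Finset.mem_range] at hk; omega
      have : a k * b (n - k) * qfact (q : ℂ) k * qfact (q : ℂ) (n - k) / qfact (q : ℂ) n =
          (a k * b (n - k)) * (qfact (q : ℂ) k * qfact (q : ℂ) (n - k) / qfact (q : ℂ) n) := by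
        ring
      rw [this, norm_mul, norm_mul]
      calc ‖a k‖ * ‖b (n - k)‖ * ‖qfact (q : ℂ) k * qfact (q : ℂ) (n - k) / qfact (q : ℂ) n‖
          ≤ ‖a k‖ * ‖b (n - k)‖ * 1 :=
            mul_le_mul_of_nonneg_left (qratio_le_one hq0 hq1 hk')
              (mul_nonneg (norm_nonneg _) (norm_nonneg _))
        _ = ‖a k‖ * ‖b (n - k)‖ := mul_one _
    have hsum : Summable fun n => ‖duh (q : ℂ) a b n‖ :=
      Summable.of_nonneg_of_le (fun n => norm_nonneg _) hbound hFsum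
    refine ⟨hsum, ?_⟩
    calc ∑' n, ‖duh (q : ℂ) a b n‖ ≤ ∑' n, F n := Summable.tsum_le_tsum hbound hsum hFsum
      _ = (∑' n, ‖a n‖) * ∑' n, ‖b n‖ :=
        (tsum_mul_tsum_eq_tsum_sum_range_of_summable_norm ha' hb').symm
  · -- commutativity
    intro a b
    funext n
    rw [duh_eq_coeff hq0 hq1, duh_eq_coeff hq0 hq1, mul_comm]
  · -- associativity
    intro a b c
    funext n
    rw [duh_eq_coeff hq0 hq1, duh_eq_coeff hq0 hq1, mk_duh hq0 hq1, mk_duh hq0 hq1, mul_assoc]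
  · -- unit
    intro a
    funext n
    rw [duh_eq_coeff hq0 hq1]
    have : PowerSeries.mk (fun k => (if k = 0 then (1 : ℂ) else 0) * qfact (q : ℂ) k) =
        (1 : PowerSeries ℂ) := by
      ext m
      rw [PowerSeries.coeff_mk, PowerSeries.coeff_one]
      by_cases h : m = 0 <;> simp [h, qfact]
    rw [this, one_mul, PowerSeries.coeff_mk,
      mul_div_cancel_right₀ _ (qfact_ne_zero hq0 hq1 n)]
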